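/- (First-order conditions for the restricted two-camp game.) Fix nodes α, β, γ, δ and budgets k_g, k_b > 0, and define g(k₁, l₁) = F(k₁ e_α, (k_g − k₁) e_β, l₁ e_γ, (k_b − l₁) e_δ), where e_i denotes the i-th standard basis vector. Set A = θ_γ θ_δ (1 − c_γ) b_{δγ}, D = θ_α θ_β (1 + c_α) b_{βα}, B = (1/2)(θ_α θ_δ (1 + c_α) b_{δα} − θ_γ θ_β (1 − c_γ) b_{βγ}), E_g = −θ_β (Σ_i c_i b_{βi} + r_β) + θ_α (1 + c_α)( s_α + k_g (θ_β/2) b_{βα} + k_b (θ_δ/2) b_{δα} ), and E_b = −θ_δ (Σ_i c_i b_{δi} − r_δ) − θ_γ (1 − c_γ)( s_γ + k_g (θ_β/2) b_{βγ} + k_b (θ_δ/2) b_{δγ} ). Then for every (k₁, l₁) ∈ ℝ², the partial derivatives ∂g/∂k₁ and ∂g/∂l₁ both vanish at (k₁, l₁) if and only if D k₁ + B l₁ = E_g and B k₁ − A l₁ = E_b. -/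

import Mathlib

/-- The two-phase objective function `F(x¹,x²,y¹,y²)` (the sum of final opinions). -/
noncomputable def twoPhaseF (n : ℕ) (θ c r s : Fin n → ℝ)
    (b : Matrix (Fin n) (Fin n) ℝ) (x1 x2 y1 y2 : Fin n → ℝ) : ℝ :=
  (∑ i, ∑ j, c i * b j i)
  + (∑ j, x2 j * (θ j / 2) * ((∑ i, c i * b j i) + r j))
  + (∑ j, y2 j * (θ j / 2) * ((∑ i, c i * b j i) - r j))
  + (∑ i, x1 i * (θ i / 2) * (1 + c i) *
      (s i + ∑ j, (x2 j + y2 j) * (θ j / 2) * b j i))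
  - (∑ i, y1 i * (θ i / 2) * (1 - c i) *
      (s i + ∑ j, (x2 j + y2 j) * (θ j / 2) * b j i))


private lemma quad_deriv' (p q u : ℝ) (x : ℝ) :
    deriv (fun t : ℝ => p + q * t + u * t ^ 2) x = q + 2 * u * x := by
  have h : HasDerivAt (fun t : ℝ => p + q * t + u * t ^ 2) (q + 2 * u * x) x := by
    have h1 := ((hasDerivAt_id x).const_mul q).const_add p
    have h2 := (hasDerivAt_pow 2 x).const_mul u
    have := h1.add h2
    simpa [Pi.add_def, mul_comm, mul_assoc, mul_left_comm] using this
  exact h.deriv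

/-- first-order conditions for the restricted two-camp game
`g(k₁,l₁) = F(k₁ e_α, (k_g−k₁) e_β, l₁ e_γ, (k_b−l₁) e_δ)`: both partial
derivatives vanish at `(k₁,l₁)` iff `D k₁ + B l₁ = E_g` and `B k₁ − A l₁ = E_b`. -/
theorem first_order_conditions_two_camp_game (n : ℕ) (hn : 0 < n)
    (W : Matrix (Fin n) (Fin n) ℝ)
    (hW : ∀ i, ∑ j, |W i j| < 1)
    (w0 θ z0 : Fin n → ℝ)
    (Δ : Matrix (Fin n) (Fin n) ℝ) (hΔ : Δ = (1 - W)⁻¹)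
    (r : Fin n → ℝ) (hr : ∀ i, r i = ∑ j, Δ j i)
    (c : Fin n → ℝ) (hc : ∀ i, c i = w0 i * z0 i)
    (b : Matrix (Fin n) (Fin n) ℝ) (hb : ∀ j i, b j i = r j * w0 j * Δ j i)
    (s : Fin n → ℝ) (hs : ∀ i, s i = ∑ j, b j i)
    (α β γ δ : Fin n) (kg kb : ℝ) (hkg : 0 < kg) (hkb : 0 < kb)
    (g : ℝ → ℝ → ℝ)
    (hg : ∀ k₁ l₁ : ℝ, g k₁ l₁ =
      twoPhaseF n θ c r s b
        (fun i => if i = α then k₁ else 0)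
        (fun i => if i = β then kg - k₁ else 0)
        (fun i => if i = γ then l₁ else 0)
        (fun i => if i = δ then kb - l₁ else 0))
    (A B D Eg Eb : ℝ)
    (hA : A = θ γ * θ δ * (1 - c γ) * b δ γ)
    (hD : D = θ α * θ β * (1 + c α) * b β α)
    (hB : B = (θ α * θ δ * (1 + c α) * b δ α - θ γ * θ β * (1 - c γ) * b β γ) / 2)
    (hEg : Eg = -(θ β) * ((∑ i, c i * b β i) + r β)
      + θ α * (1 + c α) * (s α + kg * (θ β / 2) * b β α + kb * (θ δ / 2) * b δ α))
    (hEb : Eb = -(θ δ) * ((∑ i, c i * b δ i) - r δ)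
      - θ γ * (1 - c γ) * (s γ + kg * (θ β / 2) * b β γ + kb * (θ δ / 2) * b δ γ)) :
    ∀ k₁ l₁ : ℝ,
      (deriv (fun t => g t l₁) k₁ = 0 ∧ deriv (fun t => g k₁ t) l₁ = 0) ↔
      (D * k₁ + B * l₁ = Eg ∧ B * k₁ - A * l₁ = Eb) := by
  set a0 : ℝ := (∑ i, ∑ j, c i * b j i) + kg * (θ β / 2) * ((∑ i, c i * b β i) + r β)
        + kb * (θ δ / 2) * ((∑ i, c i * b δ i) - r δ) with ha0
  have hform : ∀ k₁ l₁ : ℝ, g k₁ l₁ =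
      a0 + (Eg / 2) * k₁ + (Eb / 2) * l₁
        - (D / 4) * k₁ ^ 2 + (A / 4) * l₁ ^ 2 - (B / 2) * (k₁ * l₁) := by
    intro k₁ l₁
    rw [hg, ha0]
    subst hA hB hD hEg hEb
    simp only [twoPhaseF, add_mul, ite_mul, zero_mul, Finset.sum_add_distrib,
      Finset.sum_ite_eq', Finset.mem_univ, if_true]
    ring
  intro k₁ l₁
  have e1 : (fun t => g t l₁) = fun t : ℝ =>
      (a0 + (Eb / 2) * l₁ + (A / 4) * l₁ ^ 2) + (Eg / 2 - (B / 2) * l₁) * t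
        + (-(D / 4)) * t ^ 2 := by
    funext t; rw [hform]; ring
  have e2 : (fun t => g k₁ t) = fun t : ℝ =>
      (a0 + (Eg / 2) * k₁ - (D / 4) * k₁ ^ 2) + (Eb / 2 - (B / 2) * k₁) * t
        + (A / 4) * t ^ 2 := by
    funext t; rw [hform]; ring
  rw [e1, e2, quad_deriv', quad_deriv']
  constructor
  · rintro ⟨h1, h2⟩
    constructor <;> linarith
  · rintro ⟨h1, h2⟩
    constructor <;> linarith
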